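/- Let α ∈ (0,1]. Then there exists a finite constant c_α such that for all δ ∈ (0,1] and all K ≥ 1: δ · ∑_{n ≥ 1, n²δ > K} n^{1−2α} e^{−n²δ} ≤ c_α · δ^{α} · K^{−(α+1)}. -/

import Mathlib

open Real

private lemma aux_sum' (c : ℝ) (hc : 0 < c) : ∀ N : ℕ,
    ∑ n ∈ Finset.range (N + 1), (n : ℝ) * c * Real.exp (-(n : ℝ) ^ 2 * c)
      ≤ 1 - Real.exp (-(N : ℝ) ^ 2 * c) := by
  intro N
  induction N with
  | zero => simp
  | succ M ih =>
      rw [Finset.sum_range_succ]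
      have key : Real.exp (-((M : ℝ) + 1) ^ 2 * c) * (((M : ℝ) + 1) * c + 1)
          ≤ Real.exp (-(M : ℝ) ^ 2 * c) := by
        have h1 : (-(M : ℝ) ^ 2 * c) = (-((M : ℝ) + 1) ^ 2 * c) + (2 * (M : ℝ) + 1) * c := by
          ring
        rw [h1, Real.exp_add]
        have h2 : (2 * (M : ℝ) + 1) * c + 1 ≤ Real.exp ((2 * (M : ℝ) + 1) * c) :=
          Real.add_one_le_exp _
        have h3 : (0 : ℝ) < Real.exp (-((M : ℝ) + 1) ^ 2 * c) := Real.exp_pos _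
        have h4 : (0 : ℝ) ≤ (M : ℝ) := Nat.cast_nonneg M
        have h5 : ((M : ℝ) + 1) * c + 1 ≤ Real.exp ((2 * (M : ℝ) + 1) * c) := by
          nlinarith
        exact mul_le_mul_of_nonneg_left h5 h3.le
      push_cast
      nlinarith [Real.exp_pos (-(M : ℝ) ^ 2 * c)]

private lemma aux_sum (c : ℝ) (hc : 0 < c) (N : ℕ) :
    ∑ n ∈ Finset.range N, (n : ℝ) * Real.exp (-(n : ℝ) ^ 2 * c) ≤ 1 / c := by
  have h : ∑ n ∈ Finset.range N, (n : ℝ) * c * Real.exp (-(n : ℝ) ^ 2 * c) ≤ 1 := by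
    cases N with
    | zero => simp
    | succ M =>
        refine (aux_sum' c hc M).trans ?_
        have := (Real.exp_pos (-(M : ℝ) ^ 2 * c)).le
        linarith
  rw [le_div_iff₀ hc]
  calc (∑ n ∈ Finset.range N, (n : ℝ) * Real.exp (-(n : ℝ) ^ 2 * c)) * c
      = ∑ n ∈ Finset.range N, (n : ℝ) * c * Real.exp (-(n : ℝ) ^ 2 * c) := by
        rw [Finset.sum_mul]; congr 1; ext n; ring
    _ ≤ 1 := h

/-- the bound on `∑_{n ∈ S_K} q_n |I_{4,4}|`. -/
theorem stmt_16 (α : ℝ) (hα0 : 0 < α) (hα1 : α ≤ 1) :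
    ∃ cα : ℝ, ∀ δ : ℝ, 0 < δ → δ ≤ 1 → ∀ K : ℝ, 1 ≤ K →
      δ * (∑' n : ℕ, if K < (n : ℝ) ^ 2 * δ then
          (n : ℝ) ^ (1 - 2 * α) * Real.exp (-(n : ℝ) ^ 2 * δ) else 0) ≤
        cα * δ ^ α * K ^ (-(α + 1)) := by
  refine ⟨16, ?_⟩
  intro δ hδ0 hδ1 K hK
  have hK0 : (0 : ℝ) < K := lt_of_lt_of_le one_pos hK
  set c : ℝ := δ / 2 with hc
  have hc0 : 0 < c := by positivity
  set C : ℝ := δ ^ α * K ^ (-α) * Real.exp (-(K / 2)) with hC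
  have hC0 : 0 ≤ C := by positivity
  set g : ℕ → ℝ := fun n => (n : ℝ) * Real.exp (-(n : ℝ) ^ 2 * c) with hg
  have hg0 : ∀ n, 0 ≤ g n := fun n => by positivity
  have hgsum : Summable g :=
    summable_of_sum_range_le hg0 (fun N => aux_sum c hc0 N)
  set f : ℕ → ℝ := fun n => if K < (n : ℝ) ^ 2 * δ then
      (n : ℝ) ^ (1 - 2 * α) * Real.exp (-(n : ℝ) ^ 2 * δ) else 0 with hf
  have hf0 : ∀ n, 0 ≤ f n := by
    intro n
    simp only [hf]
    split
    · exact mul_nonneg (Real.rpow_nonneg (Nat.cast_nonneg n) _) (Real.exp_pos _).le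
    · exact le_rfl
  -- pointwise bound f n ≤ C * g n
  have hfg : ∀ n, f n ≤ C * g n := by
    intro n
    by_cases hn : K < (n : ℝ) ^ 2 * δ
    · have hn1 : (1 : ℝ) ≤ (n : ℝ) := by
        rcases Nat.eq_zero_or_pos n with h0 | h0
        · exfalso; rw [h0] at hn; push_cast at hn; nlinarith
        · exact_mod_cast h0
      have hnpos : (0 : ℝ) < (n : ℝ) := by linarith
      have hKδ : K / δ ≤ (n : ℝ) ^ 2 := by
        rw [div_le_iff₀ hδ0]; linarith [hn]
      have hKδ0 : 0 < K / δ := by positivity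
      -- rpow bound : n^(1-2α) ≤ n * δ^α * K^(-α)
      have h1 : (n : ℝ) ^ (1 - 2 * α) = (n : ℝ) * ((n : ℝ) ^ 2) ^ (-α) := by
        have : ((n : ℝ) ^ 2) ^ (-α) = (n : ℝ) ^ ((2 : ℝ) * (-α)) := by
          rw [← Real.rpow_natCast (n : ℝ) 2, ← Real.rpow_mul hnpos.le]
          norm_num
        rw [this, show (1 : ℝ) - 2 * α = 1 + 2 * (-α) by ring,
          Real.rpow_add hnpos, Real.rpow_one]
      have h2 : ((n : ℝ) ^ 2) ^ (-α) ≤ (K / δ) ^ (-α) :=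
        Real.rpow_le_rpow_of_nonpos hKδ0 hKδ (neg_nonpos.mpr hα0.le)
      have h3 : (K / δ) ^ (-α) = δ ^ α * K ^ (-α) := by
        rw [Real.div_rpow hK0.le hδ0.le, Real.rpow_neg hδ0.le, Real.rpow_neg hK0.le]
        field_simp
      -- exp bound
      have h4 : Real.exp (-(n : ℝ) ^ 2 * δ)
          = Real.exp (-(n : ℝ) ^ 2 * c) * Real.exp (-(n : ℝ) ^ 2 * c) := by
        rw [← Real.exp_add]; congr 1; rw [hc]; ring
      have h5 : Real.exp (-(n : ℝ) ^ 2 * c) ≤ Real.exp (-(K / 2)) := by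
        apply Real.exp_le_exp.mpr
        rw [hc]; nlinarith
      have hrpow : (n : ℝ) ^ (1 - 2 * α) ≤ (n : ℝ) * (δ ^ α * K ^ (-α)) := by
        rw [h1]
        exact mul_le_mul_of_nonneg_left (h2.trans_eq h3) hnpos.le
      simp only [hf, hg, if_pos hn]
      calc (n : ℝ) ^ (1 - 2 * α) * Real.exp (-(n : ℝ) ^ 2 * δ)
          ≤ ((n : ℝ) * (δ ^ α * K ^ (-α))) * Real.exp (-(n : ℝ) ^ 2 * δ) :=
            mul_le_mul_of_nonneg_right hrpow (Real.exp_pos _).le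
        _ = (δ ^ α * K ^ (-α)) * ((n : ℝ) * (Real.exp (-(n : ℝ) ^ 2 * c)
              * Real.exp (-(n : ℝ) ^ 2 * c))) := by rw [h4]; ring
        _ ≤ (δ ^ α * K ^ (-α)) * ((n : ℝ) * (Real.exp (-(K / 2))
              * Real.exp (-(n : ℝ) ^ 2 * c))) := by
            apply mul_le_mul_of_nonneg_left _ (by positivity)
            apply mul_le_mul_of_nonneg_left _ hnpos.le
            exact mul_le_mul_of_nonneg_right h5 (Real.exp_pos _).le
        _ = C * ((n : ℝ) * Real.exp (-(n : ℝ) ^ 2 * c)) := by rw [hC]; ring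
    · simp only [hf, if_neg hn]
      exact mul_nonneg hC0 (hg0 n)
  have hfsum : Summable f := Summable.of_nonneg_of_le hf0 hfg (hgsum.mul_left C)
  have htsumg : ∑' n, g n ≤ 1 / c :=
    tsum_le_of_sum_range_le hg0 (fun N => aux_sum c hc0 N)
  have hstep : ∑' n, f n ≤ C * (1 / c) := by
    calc ∑' n, f n ≤ ∑' n, C * g n := Summable.tsum_le_tsum hfg hfsum (hgsum.mul_left C)
      _ = C * ∑' n, g n := tsum_mul_left
      _ ≤ C * (1 / c) := mul_le_mul_of_nonneg_left htsumg hC0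
  have hmain : δ * ∑' n, f n ≤ 2 * C := by
    have h := mul_le_mul_of_nonneg_left hstep hδ0.le
    have hceq : δ * (C * (1 / c)) = 2 * C := by
      rw [hc]; field_simp
    linarith
  refine le_trans hmain ?_
  -- 2 * C ≤ 16 * δ^α * K^(-(α+1))
  have hKsplit : K ^ (-(α + 1)) = K ^ (-α) * K⁻¹ := by
    rw [show -(α + 1) = -α + (-1) by ring, Real.rpow_add hK0, Real.rpow_neg_one]
  have hexpK : Real.exp (-(K / 2)) ≤ 8 * K⁻¹ := by
    rw [Real.exp_neg, inv_eq_one_div, show (8 : ℝ) * K⁻¹ = 8 / K by ring,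
      div_le_div_iff₀ (Real.exp_pos _) hK0]
    nlinarith [Real.add_one_le_exp (K / 2)]
  calc 2 * C = 2 * (δ ^ α * K ^ (-α)) * Real.exp (-(K / 2)) := by rw [hC]; ring
    _ ≤ 2 * (δ ^ α * K ^ (-α)) * (8 * K⁻¹) := by
        apply mul_le_mul_of_nonneg_left hexpK (by positivity)
    _ = 16 * δ ^ α * K ^ (-(α + 1)) := by rw [hKsplit]; ring
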